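/- arXiv:2211.15033 — 3 statements merged into one kernel-verified Lean document; each statement's English description precedes it below -/
import Mathlib

section
/- Correlation Bound (Lemma 1). Let A and A' be n×n complex Hermitian matrices with A² = I, A'² = I and A·A' + A'·A = 0, and let B be an m×m complex Hermitian matrix with B² = I. Let ρ be an (nm)×(nm) positive semidefinite complex matrix with trace 1. Then (Re tr(ρ·(A ⊗ B)))² + (Re tr(ρ·(A' ⊗ B)))² ≤ 1. -/
open Matrix Kronecker
open scoped ComplexOrder

private lemma kron_conjT {n m : ℕ} (A : Matrix (Fin n) (Fin n) ℂ)
    (B : Matrix (Fin m) (Fin m) ℂ) : (A ⊗ₖ B)ᴴ = Aᴴ ⊗ₖ Bᴴ := by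
  ext ⟨i, j⟩ ⟨k, l⟩
  simp [conjTranspose_apply, kroneckerMap_apply, mul_comm]

private lemma trace_re_nonneg {k : Type*} [Fintype k] [DecidableEq k]
    {M : Matrix k k ℂ} (hM : M.PosSemidef) : 0 ≤ M.trace.re := by
  have h : ∀ i, 0 ≤ (M i i).re := by
    intro i
    have := hM.re_dotProduct_nonneg (Pi.single i 1)
    simpa [dotProduct, mulVec, Pi.single_apply, Finset.sum_ite_eq,
      Finset.sum_ite_eq'] using this
  rw [Matrix.trace, Complex.re_sum]
  exact Finset.sum_nonneg fun i _ => h i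

open scoped MatrixOrder in
private lemma trace_mul_re_nonneg {k : Type*} [Fintype k] [DecidableEq k]
    {ρ X : Matrix k k ℂ} (hρ : ρ.PosSemidef) (hX : X.PosSemidef) :
    0 ≤ (ρ * X).trace.re := by
  set S := CFC.sqrt ρ with hS
  have hSS : S * S = ρ := CFC.sqrt_mul_sqrt_self ρ hρ.nonneg
  have hSH : Sᴴ = S := (CFC.sqrt_nonneg ρ).posSemidef.1
  have hps : (S * X * Sᴴ).PosSemidef := hX.mul_mul_conjTranspose_same S
  have : (ρ * X).trace = (S * X * Sᴴ).trace := by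
    rw [hSH, ← hSS, mul_assoc, trace_mul_comm S (S * X)]
  rw [this]
  exact trace_re_nonneg hps

/-- For a state ρ and a Hermitian involution M, `Re tr(ρ M) ≤ 1`. -/
private lemma trace_le_one {k : Type*} [Fintype k] [DecidableEq k]
    {ρ M : Matrix k k ℂ} (hρ : ρ.PosSemidef) (hρtr : ρ.trace = 1)
    (hM : M.IsHermitian) (hM2 : M * M = 1) :
    ((ρ * M).trace).re ≤ 1 := by
  set N : Matrix k k ℂ := 1 - M with hN
  have hNH : Nᴴ = N := by
    simp [hN, conjTranspose_sub, hM.eq]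
  have hNN : N * N = N + N := by
    simp only [hN, mul_sub, sub_mul, one_mul, mul_one, hM2]
    abel
  have hpsd : (Nᴴ * N).PosSemidef := posSemidef_conjTranspose_mul_self N
  have h1 : 0 ≤ (ρ * (Nᴴ * N)).trace.re := trace_mul_re_nonneg hρ hpsd
  have h2 : (ρ * (Nᴴ * N)).trace = (ρ * N).trace + (ρ * N).trace := by
    rw [hNH, hNN, mul_add, trace_add]
  have h3 : (ρ * N).trace = 1 - (ρ * M).trace := by
    rw [hN, mul_sub, trace_sub, mul_one, hρtr]
  rw [h2, h3] at h1
  simp only [Complex.add_re, Complex.sub_re, Complex.one_re] at h1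
  linarith

/-- Key step: for reals c, s with c² + s² = 1, the combined correlator is ≤ 1. -/
private lemma combo_le_one
    (n m : ℕ)
    (A A' : Matrix (Fin n) (Fin n) ℂ)
    (hA : A.IsHermitian) (hA' : A'.IsHermitian)
    (hA2 : A * A = 1) (hA'2 : A' * A' = 1)
    (hanti : A * A' + A' * A = 0)
    (B : Matrix (Fin m) (Fin m) ℂ)
    (hB : B.IsHermitian) (hB2 : B * B = 1)
    (ρ : Matrix (Fin n × Fin m) (Fin n × Fin m) ℂ)
    (hρ : ρ.PosSemidef) (hρtr : ρ.trace = 1)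
    (c s : ℝ) (hcs : c ^ 2 + s ^ 2 = 1) :
    c * ((ρ * (A ⊗ₖ B)).trace).re + s * ((ρ * (A' ⊗ₖ B)).trace).re ≤ 1 := by
  set C : Matrix (Fin n) (Fin n) ℂ := (c : ℂ) • A + (s : ℂ) • A' with hC
  have hCH : C.IsHermitian := by
    unfold Matrix.IsHermitian
    simp [hC, conjTranspose_add, conjTranspose_smul, hA.eq, hA'.eq,
      Complex.conj_ofReal]
  have hcsC : (c : ℂ) ^ 2 + (s : ℂ) ^ 2 = 1 := by
    exact_mod_cast congrArg (Complex.ofReal) hcs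
  have hC2 : C * C = 1 := by
    have expand : C * C = ((c : ℂ) * c) • (A * A) + ((c : ℂ) * s) • (A * A' + A' * A)
        + ((s : ℂ) * s) • (A' * A') := by
      simp only [hC, add_mul, mul_add, smul_mul_assoc, mul_smul_comm, smul_smul, smul_add]
      ring_nf
      abel
    rw [expand, hA2, hA'2, hanti, smul_zero, add_zero, ← add_smul]
    rw [show (c : ℂ) * c + (s : ℂ) * s = (c : ℂ) ^ 2 + (s : ℂ) ^ 2 by ring, hcsC, one_smul]
  set M : Matrix (Fin n × Fin m) (Fin n × Fin m) ℂ := C ⊗ₖ B with hM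
  have hMH : M.IsHermitian := by
    unfold Matrix.IsHermitian
    rw [hM, kron_conjT, hCH.eq, hB.eq]
  have hM2 : M * M = 1 := by
    rw [hM, ← mul_kronecker_mul, hC2, hB2, one_kronecker_one]
  have hkey := trace_le_one hρ hρtr hMH hM2
  have hdecomp : (ρ * M).trace = (c : ℂ) * (ρ * (A ⊗ₖ B)).trace
      + (s : ℂ) * (ρ * (A' ⊗ₖ B)).trace := by
    rw [hM, hC, add_kronecker, smul_kronecker, smul_kronecker, mul_add, trace_add,
      mul_smul_comm, mul_smul_comm, trace_smul, trace_smul, smul_eq_mul, smul_eq_mul]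
  rw [hdecomp] at hkey
  simpa [Complex.add_re, Complex.re_ofReal_mul] using hkey

/-- **Correlation Bound (Lemma 1).** For anticommuting Hermitian involutions `A, A'`
on Alice's system, a Hermitian involution `B` on Bob's system, and any state `ρ`,
the squared correlators satisfy `⟨A⊗B⟩² + ⟨A'⊗B⟩² ≤ 1`. -/
theorem correlation_bound
    (n m : ℕ)
    (A A' : Matrix (Fin n) (Fin n) ℂ)
    (hA : A.IsHermitian) (hA' : A'.IsHermitian)
    (hA2 : A * A = 1) (hA'2 : A' * A' = 1)
    (hanti : A * A' + A' * A = 0)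
    (B : Matrix (Fin m) (Fin m) ℂ)
    (hB : B.IsHermitian) (hB2 : B * B = 1)
    (ρ : Matrix (Fin n × Fin m) (Fin n × Fin m) ℂ)
    (hρ : ρ.PosSemidef) (hρtr : ρ.trace = 1) :
    ((ρ * (A ⊗ₖ B)).trace).re ^ 2 + ((ρ * (A' ⊗ₖ B)).trace).re ^ 2 ≤ 1 := by
  set a := ((ρ * (A ⊗ₖ B)).trace).re with ha
  set b := ((ρ * (A' ⊗ₖ B)).trace).re with hb
  by_cases h0 : a ^ 2 + b ^ 2 = 0
  · rw [h0]; norm_num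
  · have hpos : 0 < a ^ 2 + b ^ 2 := lt_of_le_of_ne (by positivity) (Ne.symm h0)
    set r := Real.sqrt (a ^ 2 + b ^ 2) with hr
    have hrpos : 0 < r := Real.sqrt_pos.mpr hpos
    have hr2 : r ^ 2 = a ^ 2 + b ^ 2 := Real.sq_sqrt hpos.le
    have hcs : (a / r) ^ 2 + (b / r) ^ 2 = 1 := by
      field_simp
      linarith [hr2]
    have hkey := combo_le_one n m A A' hA hA' hA2 hA'2 hanti B hB hB2 ρ hρ hρtr
      (a / r) (b / r) hcs
    have : (a / r) * a + (b / r) * b = r := by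
      field_simp
      linarith [hr2]
    rw [this] at hkey
    calc a ^ 2 + b ^ 2 = r ^ 2 := hr2.symm
      _ ≤ 1 := by nlinarith
end

section
/- Let p : {0,1} × {0,1} → ℝ with p(i,j) > 0 for all i,j and p(0,0)+p(0,1)+p(1,0)+p(1,1) = 1, and set δ = p(0,0)·p(1,0) − p(0,1)·p(1,1). Then 1 − δ/p(0,0) > 0, 1 − δ/p(1,0) > 0, 1 + δ/p(0,1) > 0, 1 + δ/p(1,1) > 0, and h(p(0,1)+p(1,0)) + h(p(0,0)+p(0,1)) + Σ_{i,j} p(i,j)·log p(i,j) = −p(0,0)·log(1 − δ/p(0,0)) − p(1,0)·log(1 − δ/p(1,0)) − p(0,1)·log(1 + δ/p(0,1)) − p(1,1)·log(1 + δ/p(1,1)), where h(x) = −x·log x − (1−x)·log(1−x) and log is the natural logarithm. -/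
/-- The identity expressing `Δ = h(Q) − H(B₁|A₀)` in terms of
`δ = p₀₀p₁₀ − p₀₁p₁₁`: for a strictly positive two-bit distribution `p`,
all four arguments `1 ∓ δ/pᵢⱼ` are positive and
`h(p₀₁+p₁₀) + h(p₀₀+p₀₁) + Σ pᵢⱼ log pᵢⱼ
  = −p₀₀ log(1−δ/p₀₀) − p₁₀ log(1−δ/p₁₀) − p₀₁ log(1+δ/p₀₁) − p₁₁ log(1+δ/p₁₁)`. -/
theorem delta_identity
    (p : Fin 2 → Fin 2 → ℝ)
    (hpos : ∀ i j, 0 < p i j)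
    (hsum : p 0 0 + p 0 1 + p 1 0 + p 1 1 = 1) :
    let δ : ℝ := p 0 0 * p 1 0 - p 0 1 * p 1 1
    let h : ℝ → ℝ := fun x => -x * Real.log x - (1 - x) * Real.log (1 - x)
    0 < 1 - δ / p 0 0 ∧ 0 < 1 - δ / p 1 0 ∧ 0 < 1 + δ / p 0 1 ∧ 0 < 1 + δ / p 1 1 ∧
    h (p 0 1 + p 1 0) + h (p 0 0 + p 0 1)
        + (p 0 0 * Real.log (p 0 0) + p 0 1 * Real.log (p 0 1)
          + p 1 0 * Real.log (p 1 0) + p 1 1 * Real.log (p 1 1))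
      = -(p 0 0 * Real.log (1 - δ / p 0 0)) - p 1 0 * Real.log (1 - δ / p 1 0)
        - p 0 1 * Real.log (1 + δ / p 0 1) - p 1 1 * Real.log (1 + δ / p 1 1) := by
  intro δ h
  have ha := hpos 0 0
  have hb := hpos 0 1
  have hc := hpos 1 0
  have hd := hpos 1 1
  have hab : (0:ℝ) < p 0 0 + p 0 1 := by linarith
  have hbc : (0:ℝ) < p 0 1 + p 1 0 := by linarith
  have had : (0:ℝ) < p 0 0 + p 1 1 := by linarith
  have hcd : (0:ℝ) < p 1 0 + p 1 1 := by linarith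
  have e1 : 1 - δ / p 0 0 = (p 0 0 + p 0 1) * (p 0 0 + p 1 1) / p 0 0 := by
    field_simp [δ]; linear_combination (-(p 0 0)) * hsum
  have e2 : 1 - δ / p 1 0 = (p 0 1 + p 1 0) * (p 1 0 + p 1 1) / p 1 0 := by
    field_simp [δ]; linear_combination (-(p 1 0)) * hsum
  have e3 : 1 + δ / p 0 1 = (p 0 0 + p 0 1) * (p 0 1 + p 1 0) / p 0 1 := by
    field_simp [δ]; linear_combination (-(p 0 1)) * hsum
  have e4 : 1 + δ / p 1 1 = (p 0 0 + p 1 1) * (p 1 0 + p 1 1) / p 1 1 := by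
    field_simp [δ]; linear_combination (-(p 1 1)) * hsum
  refine ⟨?_, ?_, ?_, ?_, ?_⟩
  · rw [e1]; positivity
  · rw [e2]; positivity
  · rw [e3]; positivity
  · rw [e4]; positivity
  · have q1 : 1 - (p 0 1 + p 1 0) = p 0 0 + p 1 1 := by linarith
    have q2 : 1 - (p 0 0 + p 0 1) = p 1 0 + p 1 1 := by linarith
    simp only [h]
    rw [e1, e2, e3, e4, q1, q2,
      Real.log_div (by positivity) ha.ne', Real.log_mul hab.ne' had.ne',
      Real.log_div (by positivity) hc.ne', Real.log_mul hbc.ne' hcd.ne',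
      Real.log_div (by positivity) hb.ne', Real.log_mul hab.ne' hbc.ne',
      Real.log_div (by positivity) hd.ne', Real.log_mul had.ne' hcd.ne']
    ring
end

section
/- Let p : {0,1} × {0,1} → ℝ with p(i,j) > 0 for all i,j and total sum 1, and suppose h(p(0,1)+p(1,0)) + h(p(0,0)+p(0,1)) + Σ_{i,j} p(i,j)·log p(i,j) = 0, where h(x) = −x·log x − (1−x)·log(1−x). Then p(0,0)·p(1,0) = p(0,1)·p(1,1). -/
private lemma mul_log_sub_le {x y : ℝ} (hx : 0 < x) (hy : 0 < y) :
    x * (Real.log y - Real.log x) ≤ y - x := by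
  have h := Real.log_le_sub_one_of_pos (div_pos hy hx)
  rw [Real.log_div hy.ne' hx.ne'] at h
  have := mul_le_mul_of_nonneg_left h hx.le
  have hxy : x * (y / x - 1) = y - x := by field_simp
  linarith [hxy ▸ this]

private lemma eq_of_mul_log_sub_eq {x y : ℝ} (hx : 0 < x) (hy : 0 < y)
    (h : x * (Real.log y - Real.log x) = y - x) : x = y := by
  by_contra hne
  have hne' : y / x ≠ 1 := by
    intro h1
    rw [div_eq_one_iff_eq hx.ne'] at h1
    exact hne h1.symm
  have hlt := Real.log_lt_sub_one_of_pos (div_pos hy hx) hne'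
  rw [Real.log_div hy.ne' hx.ne'] at hlt
  have := mul_lt_mul_of_pos_left hlt hx
  have hxy : x * (y / x - 1) = y - x := by field_simp
  rw [hxy] at this
  linarith

/-- Equality condition for `h(Q) ≥ H(B₁|A₀)`: if the difference
`Δ = h(p₀₁+p₁₀) + h(p₀₀+p₀₁) + Σ pᵢⱼ log pᵢⱼ` vanishes for a strictly positive
two-bit distribution `p`, then `p₀₀ p₁₀ = p₀₁ p₁₁`. -/
theorem delta_eq_zero_imp
    (p : Fin 2 → Fin 2 → ℝ)
    (hpos : ∀ i j, 0 < p i j)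
    (hsum : p 0 0 + p 0 1 + p 1 0 + p 1 1 = 1)
    (heq : (fun x : ℝ => -x * Real.log x - (1 - x) * Real.log (1 - x)) (p 0 1 + p 1 0)
        + (fun x : ℝ => -x * Real.log x - (1 - x) * Real.log (1 - x)) (p 0 0 + p 0 1)
        + (p 0 0 * Real.log (p 0 0) + p 0 1 * Real.log (p 0 1)
          + p 1 0 * Real.log (p 1 0) + p 1 1 * Real.log (p 1 1)) = 0) :
    p 0 0 * p 1 0 = p 0 1 * p 1 1 := by
  simp only at heq
  set a := p 0 0 with ha'
  set b := p 0 1 with hb'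
  set c := p 1 0 with hc'
  set d := p 1 1 with hd'
  have hA := hpos 0 0
  have hB := hpos 0 1
  have hC := hpos 1 0
  have hD := hpos 1 1
  rw [← ha'] at hA; rw [← hb'] at hB; rw [← hc'] at hC; rw [← hd'] at hD
  have e1 : 1 - (b + c) = a + d := by linarith
  have e2 : 1 - (a + b) = c + d := by linarith
  rw [e1, e2] at heq
  -- the four q values
  have hab : 0 < a + b := by linarith
  have hcd : 0 < c + d := by linarith
  have hbc : 0 < b + c := by linarith
  have had : 0 < a + d := by linarith
  have hq00 : 0 < (a + b) * (a + d) := mul_pos hab had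
  have hq01 : 0 < (a + b) * (b + c) := mul_pos hab hbc
  have hq10 : 0 < (c + d) * (b + c) := mul_pos hcd hbc
  have hq11 : 0 < (c + d) * (a + d) := mul_pos hcd had
  have l00 : Real.log ((a + b) * (a + d)) = Real.log (a + b) + Real.log (a + d) :=
    Real.log_mul hab.ne' had.ne'
  have l01 : Real.log ((a + b) * (b + c)) = Real.log (a + b) + Real.log (b + c) :=
    Real.log_mul hab.ne' hbc.ne'
  have l10 : Real.log ((c + d) * (b + c)) = Real.log (c + d) + Real.log (b + c) :=
    Real.log_mul hcd.ne' hbc.ne'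
  have l11 : Real.log ((c + d) * (a + d)) = Real.log (c + d) + Real.log (a + d) :=
    Real.log_mul hcd.ne' had.ne'
  -- the sum of the four KL terms is zero
  have hS : a * (Real.log ((a + b) * (a + d)) - Real.log a)
      + b * (Real.log ((a + b) * (b + c)) - Real.log b)
      + c * (Real.log ((c + d) * (b + c)) - Real.log c)
      + d * (Real.log ((c + d) * (a + d)) - Real.log d) = 0 := by
    rw [l00, l01, l10, l11]
    linear_combination -heq
  -- the differences q - p sum to zero
  have hDsum : ((a + b) * (a + d) - a) + ((a + b) * (b + c) - b)
      + ((c + d) * (b + c) - c) + ((c + d) * (a + d) - d) = 0 := by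
    linear_combination (a + b + c + d) * hsum
  have le00 := mul_log_sub_le hA hq00
  have le01 := mul_log_sub_le hB hq01
  have le10 := mul_log_sub_le hC hq10
  have le11 := mul_log_sub_le hD hq11
  have eq00 : a * (Real.log ((a + b) * (a + d)) - Real.log a) = (a + b) * (a + d) - a := by
    linarith
  have eq01 : b * (Real.log ((a + b) * (b + c)) - Real.log b) = (a + b) * (b + c) - b := by
    linarith
  have eq10 : c * (Real.log ((c + d) * (b + c)) - Real.log c) = (c + d) * (b + c) - c := by
    linarith
  have eq11 : d * (Real.log ((c + d) * (a + d)) - Real.log d) = (c + d) * (a + d) - d := by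
    linarith
  have fa := eq_of_mul_log_sub_eq hA hq00 eq00
  have fb := eq_of_mul_log_sub_eq hB hq01 eq01
  have fc := eq_of_mul_log_sub_eq hC hq10 eq10
  have fd := eq_of_mul_log_sub_eq hD hq11 eq11
  linear_combination c * fa + ((a + b) * (a + d)) * fc - d * fb - ((a + b) * (b + c)) * fd
end
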